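/- Suppose f : [0,T] → ℝ^d is measurable with sup_{t∈[0,T]} ∫₀ᵗ |f(s)|(t-s)^{-α} ds < ∞, and let F(t) := ∫₀ᵗ f(s) ds. Then F ∈ W₀^{α,∞}(0,T;ℝ^d) and |F(t)| + ∫₀ᵗ |F(t)-F(s)|(t-s)^{-α-1} ds ≤ C_{α,T} ∫₀ᵗ |f(s)|(t-s)^{-α} ds for all t ∈ [0,T], where C_{α,T} depends only on α and T. -/

import Mathlib

open Real MeasureTheory intervalIntegral

section NRaux

open Set

lemma rpow_meas (c : ℝ) : Measurable fun x : ℝ => x ^ c := by measurability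

lemma swap_aux (t : ℝ) (P : ℝ → ℝ → ENNReal) (hP : Measurable (Function.uncurry P)) :
    ∫⁻ s in Set.Ioc 0 t, ∫⁻ u in Set.Ioc s t, P s u =
    ∫⁻ u in Set.Ioc 0 t, ∫⁻ s in Set.Ioo 0 u, P s u := by
  have m1 : Measurable fun p : ℝ × ℝ => if p.1 < p.2 then P p.1 p.2 else 0 :=
    Measurable.ite (measurableSet_lt measurable_fst measurable_snd) hP measurable_const
  have step1 : ∫⁻ s in Set.Ioc 0 t, ∫⁻ u in Set.Ioc s t, P s u
      = ∫⁻ s in Set.Ioc 0 t, ∫⁻ u in Set.Ioc 0 t, (if s < u then P s u else 0) := by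
    refine setLIntegral_congr_fun measurableSet_Ioc ?_
    intro s hs
    beta_reduce
    have h1 : ∫⁻ u in Set.Ioc 0 t, (if s < u then P s u else 0)
        = ∫⁻ u in Set.Ioc 0 t, (Set.Ioi s).indicator (P s) u := by
      refine setLIntegral_congr_fun measurableSet_Ioc ?_
      intro u _; simp [Set.indicator_apply, Set.mem_Ioi]
    have hset : Set.Ioi s ∩ Set.Ioc 0 t = Set.Ioc s t := by
      ext u
      simp only [Set.mem_inter_iff, Set.mem_Ioi, Set.mem_Ioc]
      constructor
      · rintro ⟨h1, _, h3⟩; exact ⟨h1, h3⟩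
      · rintro ⟨h1, h2⟩; exact ⟨h1, hs.1.trans h1, h2⟩
    rw [h1, lintegral_indicator measurableSet_Ioi,
      Measure.restrict_restrict measurableSet_Ioi, hset]
  have step2 : ∫⁻ s in Set.Ioc 0 t, ∫⁻ u in Set.Ioc 0 t, (if s < u then P s u else 0)
      = ∫⁻ u in Set.Ioc 0 t, ∫⁻ s in Set.Ioc 0 t, (if s < u then P s u else 0) :=
    lintegral_lintegral_swap m1.aemeasurable
  have step3 : ∫⁻ u in Set.Ioc 0 t, ∫⁻ s in Set.Ioc 0 t, (if s < u then P s u else 0)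
      = ∫⁻ u in Set.Ioc 0 t, ∫⁻ s in Set.Ioo 0 u, P s u := by
    refine setLIntegral_congr_fun measurableSet_Ioc ?_
    intro u hu
    beta_reduce
    have h1 : ∫⁻ s in Set.Ioc 0 t, (if s < u then P s u else 0)
        = ∫⁻ s in Set.Ioc 0 t, (Set.Iio u).indicator (fun s => P s u) s := by
      refine setLIntegral_congr_fun measurableSet_Ioc ?_
      intro s _; simp [Set.indicator_apply, Set.mem_Iio]
    have hset : Set.Iio u ∩ Set.Ioc 0 t = Set.Ioo 0 u := by
      ext s
      simp only [Set.mem_inter_iff, Set.mem_Iio, Set.mem_Ioc, Set.mem_Ioo]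
      constructor
      · rintro ⟨h1, h2, _⟩; exact ⟨h2, h1⟩
      · rintro ⟨h1, h2⟩; exact ⟨h2, h1, (h2.trans_le hu.2).le⟩
    rw [h1, lintegral_indicator measurableSet_Iio,
      Measure.restrict_restrict measurableSet_Iio, hset]
  rw [step1, step2, step3]

lemma comp1 (α t u : ℝ) (hα : 0 < α) (h0 : 0 ≤ u) (hu : u < t) :
    ∫ s in (0:ℝ)..u, (t - s) ^ (-α - 1) = α⁻¹ * ((t - u) ^ (-α) - t ^ (-α)) := by
  have hderiv : ∀ s ∈ Set.uIcc (0:ℝ) u,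
      HasDerivAt (fun s => α⁻¹ * (t - s) ^ (-α)) ((t - s) ^ (-α - 1)) s := by
    intro s hs
    rw [Set.uIcc_of_le h0] at hs
    have hts : (0:ℝ) < t - s := by
      have := hs.2; linarith
    have h1 : HasDerivAt (fun s : ℝ => t - s) (-1) s := by
      simpa using (hasDerivAt_id s).const_sub t
    have h2 : HasDerivAt (fun x : ℝ => x ^ (-α)) (-α * (t - s) ^ (-α - 1)) (t - s) := by
      simpa using Real.hasDerivAt_rpow_const (x := t - s) (p := -α) (Or.inl hts.ne')
    have h3 := (h2.comp s h1).const_mul α⁻¹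
    convert h3 using 1
    have hα0 : α ≠ 0 := hα.ne'
    all_goals first | rfl | field_simp
  have hcont : IntervalIntegrable (fun s => (t - s) ^ (-α - 1)) volume 0 u := by
    apply ContinuousOn.intervalIntegrable
    intro s hs
    rw [Set.uIcc_of_le h0] at hs
    have hts : (0:ℝ) < t - s := by have := hs.2; linarith
    exact (ContinuousWithinAt.rpow_const
      ((continuous_const.sub continuous_id).continuousWithinAt) (Or.inl hts.ne'))
  rw [intervalIntegral.integral_eq_sub_of_hasDerivAt hderiv hcont]
  simp only [sub_zero]
  ring

lemma comp1int (α t u : ℝ) (h0 : 0 ≤ u) (hu : u < t) :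
    IntegrableOn (fun s => (t - s) ^ (-α - 1)) (Set.Ioc 0 u) volume := by
  have hcont : IntervalIntegrable (fun s => (t - s) ^ (-α - 1)) volume 0 u := by
    apply ContinuousOn.intervalIntegrable
    intro s hs
    rw [Set.uIcc_of_le h0] at hs
    have hts : (0:ℝ) < t - s := by have := hs.2; linarith
    exact (ContinuousWithinAt.rpow_const
      ((continuous_const.sub continuous_id).continuousWithinAt) (Or.inl hts.ne'))
  exact hcont.1

lemma comp2 (α s t₀ : ℝ) (hα : 0 < α) (hα1 : α < 1) (h : s < t₀) :
    ∫ x in s..t₀, (x - s) ^ (-α) = (t₀ - s) ^ (1 - α) / (1 - α) := by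
  rw [intervalIntegral.integral_comp_sub_right (fun y => y ^ (-α)) s]
  rw [integral_rpow (Or.inl (by linarith))]
  rw [sub_self, Real.zero_rpow (by linarith)]
  norm_num
  rw [neg_add_eq_sub]

lemma comp2int (α s t₀ : ℝ) (hα : 0 < α) (hα1 : α < 1) :
    IntegrableOn (fun x => (x - s) ^ (-α)) (Set.Ioc s t₀) volume := by
  have h := (intervalIntegral.intervalIntegrable_rpow' (a := 0) (b := t₀ - s)
    (by linarith : (-1:ℝ) < -α)).comp_sub_right s
  simp only [zero_add] at h
  have h1 := h.1
  rwa [sub_add_cancel] at h1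

noncomputable def ee (α : ℝ) (g : ℝ → ℝ) (t s : ℝ) : ENNReal :=
  ENNReal.ofReal (g s * (t - s) ^ (-α))

noncomputable def WW (α : ℝ) (g : ℝ → ℝ) (t : ℝ) : ENNReal :=
  ∫⁻ s in Set.Ioc 0 t, ee α g t s

lemma ee_meas (α : ℝ) (g : ℝ → ℝ) (hg : Measurable g) (t : ℝ) :
    Measurable (ee α g t) := by
  apply Measurable.ennreal_ofReal
  exact hg.mul ((rpow_meas (-α)).comp (measurable_const.sub measurable_id))

lemma ee_meas2 (α : ℝ) (g : ℝ → ℝ) (hg : Measurable g) :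
    Measurable (fun p : ℝ × ℝ => ee α g p.1 p.2) := by
  apply Measurable.ennreal_ofReal
  exact (hg.comp measurable_snd).mul
    ((rpow_meas (-α)).comp (measurable_fst.sub measurable_snd))

lemma WW_meas (α : ℝ) (g : ℝ → ℝ) (hg : Measurable g) : Measurable (WW α g) := by
  have h : WW α g = fun t => ∫⁻ s, (if 0 < s ∧ s ≤ t then ee α g t s else 0) := by
    funext t
    rw [WW, ← lintegral_indicator measurableSet_Ioc]
    congr 1; ext s; simp [Set.indicator_apply, Set.mem_Ioc]
  rw [h]
  apply Measurable.lintegral_prod_right (f := fun t s => if 0 < s ∧ s ≤ t then ee α g t s else 0)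
  apply Measurable.ite
  · exact ((measurableSet_lt measurable_const measurable_snd).inter
      (measurableSet_le measurable_snd measurable_fst))
  · exact ee_meas2 α g hg
  · exact measurable_const

lemma WW_real (α : ℝ) (g : ℝ → ℝ) (hg : Measurable g) (hg0 : ∀ s, 0 ≤ g s)
    (t : ℝ) (ht : 0 ≤ t) :
    (∫ s in (0:ℝ)..t, g s * (t - s) ^ (-α)) = (WW α g t).toReal := by
  rw [intervalIntegral.integral_of_le ht, WW]
  rw [integral_eq_lintegral_of_nonneg_ae]
  · rfl
  · refine (ae_restrict_iff' measurableSet_Ioc).2 (Filter.Eventually.of_forall ?_)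
    intro s hs
    exact mul_nonneg (hg0 s) (Real.rpow_nonneg (by linarith [hs.2]) _)
  · exact (hg.mul ((rpow_meas (-α)).comp
      (measurable_const.sub measurable_id))).aestronglyMeasurable

lemma W_le (α T : ℝ) (hα : 0 < α) (hα1 : α < 1) (hT : 0 < T) (g : ℝ → ℝ)
    (hg : Measurable g) (hg0 : ∀ s, 0 ≤ g s) (hgInt : IntegrableOn g (Set.Ioc 0 T))
    (M : ℝ)
    (hsup : ∀ t ∈ Set.Icc (0:ℝ) T, (∫ s in (0:ℝ)..t, g s * (t - s) ^ (-α)) ≤ M) :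
    ∀ t ∈ Set.Icc (0:ℝ) T, WW α g t ≤ ENNReal.ofReal M := by
  have hM0 : 0 ≤ M := by
    refine le_trans ?_ (hsup 0 ⟨le_refl _, hT.le⟩)
    rw [intervalIntegral.integral_same]
  intro t₀ ht₀
  rcases eq_or_lt_of_le ht₀.1 with h0 | h0
  · rw [WW, ← h0]; simp
  set c : ENNReal := ENNReal.ofReal (T ^ (1 - α) / (1 - α)) with hc
  -- Step 1 : double integral is finite
  have hD : ∫⁻ x in Set.Ioc 0 t₀, WW α g x ≠ ⊤ := by
    have hcongr : ∫⁻ x in Set.Ioc 0 t₀, WW α g x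
        = ∫⁻ x in Set.Ioc 0 t₀, ∫⁻ s in Set.Ioo 0 x, ee α g x s := by
      refine setLIntegral_congr_fun measurableSet_Ioc ?_
      intro x _
      rw [WW]
      exact (setLIntegral_congr Ioo_ae_eq_Ioc).symm
    have hswap := (swap_aux t₀ (fun s u => ee α g u s) ?mP).symm
    case mP =>
      have h : (Function.uncurry fun s u => ee α g u s)
          = fun p : ℝ × ℝ => ENNReal.ofReal (g p.1 * (p.2 - p.1) ^ (-α)) := rfl
      rw [h]
      apply Measurable.ennreal_ofReal
      exact (hg.comp measurable_fst).mul
        ((rpow_meas (-α)).comp (measurable_snd.sub measurable_fst))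
    rw [hcongr, hswap]
    have hinner : ∀ s ∈ Set.Ioc (0:ℝ) t₀,
        ∫⁻ x in Set.Ioc s t₀, ee α g x s ≤ ENNReal.ofReal (g s) * c := by
      intro s hs
      have hsplit : ∫⁻ x in Set.Ioc s t₀, ee α g x s
          = ENNReal.ofReal (g s) * ∫⁻ x in Set.Ioc s t₀, ENNReal.ofReal ((x - s) ^ (-α)) := by
        rw [← lintegral_const_mul' _ _ ENNReal.ofReal_ne_top]
        refine setLIntegral_congr_fun measurableSet_Ioc ?_
        intro x _
        beta_reduce
        rw [ee, ENNReal.ofReal_mul (hg0 s)]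
      rw [hsplit]
      refine mul_le_mul_right ?_ _
      rcases eq_or_lt_of_le hs.2 with hseq | hslt
      · rw [hseq]; simp [Set.Ioc_self]
      · have hIcalc : ∫⁻ x in Set.Ioc s t₀, ENNReal.ofReal ((x - s) ^ (-α))
            = ENNReal.ofReal ((t₀ - s) ^ (1 - α) / (1 - α)) := by
          rw [← ofReal_integral_eq_lintegral_ofReal (comp2int α s t₀ hα hα1)]
          · rw [← intervalIntegral.integral_of_le hslt.le, comp2 α s t₀ hα hα1 hslt]
          · refine (ae_restrict_iff' measurableSet_Ioc).2 (Filter.Eventually.of_forall ?_)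
            intro x hx
            exact Real.rpow_nonneg (by linarith [hx.1]) _
        rw [hIcalc, hc]
        apply ENNReal.ofReal_le_ofReal
        have h1 : (t₀ - s) ^ (1-α) ≤ T ^ (1-α) :=
          Real.rpow_le_rpow (by linarith [hs.1]) (by linarith [hs.1, ht₀.2]) (by linarith)
        exact div_le_div_of_nonneg_right h1 (by linarith)
    have hbound : ∫⁻ s in Set.Ioc 0 t₀, ∫⁻ x in Set.Ioc s t₀, ee α g x s
        ≤ ∫⁻ s in Set.Ioc 0 t₀, ENNReal.ofReal (g s) * c :=
      setLIntegral_mono (hg.ennreal_ofReal.mul_const c) hinner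
    refine ne_top_of_le_ne_top ?_ hbound
    rw [lintegral_mul_const c hg.ennreal_ofReal]
    apply ENNReal.mul_ne_top ?_ ENNReal.ofReal_ne_top
    refine ne_top_of_le_ne_top ?_ (lintegral_mono_set (Set.Ioc_subset_Ioc le_rfl ht₀.2))
    rw [← ofReal_integral_eq_lintegral_ofReal hgInt (Filter.Eventually.of_forall hg0)]
    exact ENNReal.ofReal_ne_top
  -- Step 2 : a.e. point below t₀ has finite W
  have hnull : volume ({x | ¬ WW α g x < ⊤} ∩ Set.Ioc 0 t₀) = 0 := by
    have h := ae_lt_top (WW_meas α g hg) hD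
    rw [ae_iff] at h
    rwa [Measure.restrict_apply' measurableSet_Ioc] at h
  -- Step 3 : pick good points approaching t₀
  have hpick : ∀ n : ℕ, ∃ x, (max (t₀ - 1/(n+1)) (t₀/2) < x ∧ x < t₀) ∧ WW α g x < ⊤ := by
    intro n
    by_contra hcon
    push_neg at hcon
    set a := max (t₀ - 1/(n+1)) (t₀/2) with ha
    have hn : (0:ℝ) < 1/(n+1) := by positivity
    have ha2 : 0 < a := lt_of_lt_of_le (by linarith) (le_max_right _ _)
    have ha3 : a < t₀ := max_lt (by linarith) (by linarith)
    have hsub : Set.Ioo a t₀ ⊆ {x | ¬ WW α g x < ⊤} ∩ Set.Ioc 0 t₀ := by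
      intro y hy
      exact ⟨not_lt.mpr (hcon y ⟨hy.1, hy.2⟩), ⟨ha2.trans hy.1, hy.2.le⟩⟩
    have hz := measure_mono_null hsub hnull
    rw [Real.volume_Ioo] at hz
    rw [ENNReal.ofReal_eq_zero] at hz
    linarith
  choose x hx1 hx2 using hpick
  have hx0 : ∀ n, 0 < x n := fun n =>
    lt_trans (lt_of_lt_of_le (by positivity) (le_max_right _ _)) (hx1 n).1
  have hWn : ∀ n, WW α g (x n) ≤ ENNReal.ofReal M := by
    intro n
    have hle := hsup (x n) ⟨(hx0 n).le, ((hx1 n).2.le.trans ht₀.2)⟩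
    rw [WW_real α g hg hg0 _ (hx0 n).le] at hle
    exact (ENNReal.le_ofReal_iff_toReal_le (hx2 n).ne hM0).2 hle
  -- Step 4 : monotone limit
  set μ' := volume.withDensity (ee α g t₀) with hμ'
  have hWt₀ : WW α g t₀ = μ' (Set.Ioo 0 t₀) := by
    rw [hμ', withDensity_apply _ measurableSet_Ioo, WW]
    exact (setLIntegral_congr Ioo_ae_eq_Ioc).symm
  have hU : ⋃ n, Set.Ioo (0:ℝ) (x n) = Set.Ioo 0 t₀ := by
    ext s
    simp only [Set.mem_iUnion, Set.mem_Ioo]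
    constructor
    · rintro ⟨n, hs0, hsx⟩
      exact ⟨hs0, hsx.trans (hx1 n).2⟩
    · rintro ⟨hs0, hst⟩
      obtain ⟨n, hn⟩ := exists_nat_one_div_lt (by linarith : (0:ℝ) < t₀ - s)
      refine ⟨n, hs0, ?_⟩
      have := (hx1 n).1
      have h2 : t₀ - 1/(n+1) ≤ max (t₀ - 1/(n+1)) (t₀/2) := le_max_left _ _
      linarith
  have hdir : Directed (· ⊆ ·) (fun n => Set.Ioo (0:ℝ) (x n)) := by
    intro m n
    rcases le_total (x m) (x n) with h | h
    · exact ⟨n, Set.Ioo_subset_Ioo_right h, subset_rfl⟩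
    · exact ⟨m, subset_rfl, Set.Ioo_subset_Ioo_right h⟩
  rw [hWt₀, ← hU, hdir.measure_iUnion]
  refine iSup_le fun n => ?_
  rw [hμ', withDensity_apply _ measurableSet_Ioo]
  calc ∫⁻ s in Set.Ioo 0 (x n), ee α g t₀ s
      ≤ ∫⁻ s in Set.Ioo 0 (x n), ee α g (x n) s := by
        refine setLIntegral_mono (ee_meas α g hg (x n)) ?_
        intro s hs
        apply ENNReal.ofReal_le_ofReal
        apply mul_le_mul_of_nonneg_left ?_ (hg0 s)
        exact Real.rpow_le_rpow_of_nonpos (by linarith [hs.2])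
          (by linarith [(hx1 n).2]) (by linarith)
    _ = WW α g (x n) := by rw [WW]; exact setLIntegral_congr Ioo_ae_eq_Ioc
    _ ≤ ENNReal.ofReal M := hWn n

end NRaux

/-- Proposition 4.3 of Nualart–Rascanu: the indefinite integral `F(t)=∫₀ᵗ f`
belongs to `W₀^{α,∞}(0,T)` with the stated bound. -/
theorem stmt_14 (d : ℕ) (α T : ℝ) (hα : 0 < α) (hα2 : α < 1/2) (hT : 0 < T)
    (f : ℝ → EuclideanSpace ℝ (Fin d)) (hf : Measurable f)
    (hInt : ∀ t ∈ Set.Icc (0:ℝ) T, IntervalIntegrable f MeasureTheory.volume 0 t)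
    (M : ℝ)
    (hsup : ∀ t ∈ Set.Icc (0:ℝ) T, (∫ s in (0:ℝ)..t, ‖f s‖ * (t - s) ^ (-α)) ≤ M) :
    ∃ C > 0, ∀ t ∈ Set.Icc (0:ℝ) T,
      ‖(∫ s in (0:ℝ)..t, f s)‖ +
        (∫ s in (0:ℝ)..t,
          ‖(∫ u in (0:ℝ)..t, f u) - ∫ u in (0:ℝ)..s, f u‖ * (t - s) ^ (-α - 1)) ≤
      C * ∫ s in (0:ℝ)..t, ‖f s‖ * (t - s) ^ (-α) := by
  have hα1 : α < 1 := by linarith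
  set g : ℝ → ℝ := fun s => ‖f s‖ with hgdef
  have hg : Measurable g := hf.norm
  have hg0 : ∀ s, 0 ≤ g s := fun s => norm_nonneg _
  have hgInt : IntegrableOn g (Set.Ioc 0 T) volume := ((hInt T ⟨hT.le, le_refl T⟩).norm).1
  have hW := W_le α T hα hα1 hT g hg hg0 hgInt M hsup
  refine ⟨T ^ α + α⁻¹, by positivity, ?_⟩
  intro t ht
  rcases eq_or_lt_of_le ht.1 with h0 | h0
  · rw [← h0]; simp
  have hWle := hW t ht
  have hWfin : WW α g t ≠ ⊤ := ne_top_of_le_ne_top ENNReal.ofReal_ne_top hWle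
  have hI : (∫ s in (0:ℝ)..t, ‖f s‖ * (t - s) ^ (-α)) = (WW α g t).toReal :=
    WW_real α g hg hg0 t ht.1
  -- Term 1
  have hT1 : ‖∫ s in (0:ℝ)..t, f s‖ ≤ T ^ α * (WW α g t).toReal := by
    have hb : ∫⁻ s in Set.Ioc 0 t, ENNReal.ofReal (g s)
        ≤ ENNReal.ofReal (T ^ α) * WW α g t := by
      calc ∫⁻ s in Set.Ioc 0 t, ENNReal.ofReal (g s)
          = ∫⁻ s in Set.Ioo 0 t, ENNReal.ofReal (g s) :=
            (setLIntegral_congr Ioo_ae_eq_Ioc).symm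
        _ ≤ ∫⁻ s in Set.Ioo 0 t, ENNReal.ofReal (T ^ α) * ee α g t s := by
            refine setLIntegral_mono ((ee_meas α g hg t).const_mul _) ?_
            intro s hs
            have hts : (0:ℝ) < t - s := by linarith [hs.2]
            rw [ee, ← ENNReal.ofReal_mul (Real.rpow_nonneg hT.le α)]
            apply ENNReal.ofReal_le_ofReal
            have h2 : (t - s) ^ α ≤ T ^ α :=
              Real.rpow_le_rpow hts.le (by linarith [hs.1, ht.2]) hα.le
            have h3 : 1 ≤ T ^ α * (t - s) ^ (-α) := by
              rw [Real.rpow_neg hts.le, ← div_eq_mul_inv]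
              exact (one_le_div (Real.rpow_pos_of_pos hts α)).2 h2
            calc g s = 1 * g s := (one_mul _).symm
              _ ≤ (T ^ α * (t - s) ^ (-α)) * g s :=
                  mul_le_mul_of_nonneg_right h3 (hg0 s)
              _ = T ^ α * (g s * (t - s) ^ (-α)) := by ring
        _ = ∫⁻ s in Set.Ioc 0 t, ENNReal.ofReal (T ^ α) * ee α g t s :=
            setLIntegral_congr Ioo_ae_eq_Ioc
        _ = ENNReal.ofReal (T ^ α) * WW α g t := by
            rw [WW, lintegral_const_mul' _ _ ENNReal.ofReal_ne_top]
    calc ‖∫ s in (0:ℝ)..t, f s‖ ≤ ∫ s in (0:ℝ)..t, g s :=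
        intervalIntegral.norm_integral_le_integral_norm ht.1
      _ = (∫⁻ s in Set.Ioc 0 t, ENNReal.ofReal (g s)).toReal := by
          rw [intervalIntegral.integral_of_le ht.1,
            integral_eq_lintegral_of_nonneg_ae (Filter.Eventually.of_forall hg0)
              hg.aestronglyMeasurable]
      _ ≤ (ENNReal.ofReal (T ^ α) * WW α g t).toReal :=
          ENNReal.toReal_mono (ENNReal.mul_ne_top ENNReal.ofReal_ne_top hWfin) hb
      _ = T ^ α * (WW α g t).toReal := by
          rw [ENNReal.toReal_mul, ENNReal.toReal_ofReal (Real.rpow_nonneg hT.le α)]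
  -- Term 2
  set Ft : ℝ → EuclideanSpace ℝ (Fin d) := fun x => ∫ u in (0:ℝ)..x, f u with hFt
  have hfIntT : IntegrableOn f (Set.Icc 0 T) volume :=
    (intervalIntegrable_iff_integrableOn_Icc_of_le hT.le).1 (hInt T ⟨hT.le, le_refl T⟩)
  have hFcont : ContinuousOn Ft (Set.Icc 0 T) := by
    have h := intervalIntegral.continuousOn_primitive_interval
      (a := 0) (b := T) (f := f) (μ := volume) (by rwa [Set.uIcc_of_le hT.le])
    rwa [Set.uIcc_of_le hT.le] at h
  have hFae : AEMeasurable Ft (volume.restrict (Set.Ioc 0 t)) :=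
    (hFcont.aemeasurable measurableSet_Icc).mono_measure
      (Measure.restrict_mono
        (Set.Ioc_subset_Icc_self.trans (Set.Icc_subset_Icc le_rfl ht.2)) le_rfl)
  have hjae : AEStronglyMeasurable (fun s => ‖Ft t - Ft s‖ * (t - s) ^ (-α - 1))
      (volume.restrict (Set.Ioc 0 t)) := by
    rw [aestronglyMeasurable_iff_aemeasurable]
    exact (aemeasurable_const.sub hFae).norm.mul
      ((rpow_meas (-α-1)).comp (measurable_const.sub measurable_id)).aemeasurable
  have hJ : (∫ s in (0:ℝ)..t, ‖Ft t - Ft s‖ * (t - s) ^ (-α - 1))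
      = (∫⁻ s in Set.Ioc 0 t, ENNReal.ofReal (‖Ft t - Ft s‖ * (t - s) ^ (-α - 1))).toReal := by
    rw [intervalIntegral.integral_of_le ht.1, integral_eq_lintegral_of_nonneg_ae ?_ hjae]
    refine (ae_restrict_iff' measurableSet_Ioc).2 (Filter.Eventually.of_forall ?_)
    intro s hs
    exact mul_nonneg (norm_nonneg _) (Real.rpow_nonneg (by linarith [hs.2]) _)
  have hkey : ∫⁻ s in Set.Ioc 0 t, ENNReal.ofReal (‖Ft t - Ft s‖ * (t - s) ^ (-α - 1))
      ≤ ENNReal.ofReal α⁻¹ * WW α g t := by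
    set P : ℝ → ℝ → ENNReal :=
      fun s u => ENNReal.ofReal (g u) * ENNReal.ofReal ((t - s) ^ (-α - 1)) with hP
    have hPm : Measurable (Function.uncurry P) :=
      ((hg.comp measurable_snd).ennreal_ofReal).mul
        (((rpow_meas (-α-1)).comp (measurable_const.sub measurable_fst)).ennreal_ofReal)
    have hstep2 : ∫⁻ s in Set.Ioo 0 t, ENNReal.ofReal (‖Ft t - Ft s‖ * (t - s) ^ (-α - 1))
        ≤ ∫⁻ s in Set.Ioo 0 t, ∫⁻ u in Set.Ioc s t, P s u := by
      refine lintegral_mono_ae ((ae_restrict_iff' measurableSet_Ioo).2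
        (Filter.Eventually.of_forall ?_))
      intro s hs
      have hst : s ≤ t := hs.2.le
      have hFsub : Ft t - Ft s = ∫ u in s..t, f u :=
        intervalIntegral.integral_interval_sub_left (hInt t ⟨ht.1, ht.2⟩)
          (hInt s ⟨hs.1.le, hs.2.le.trans ht.2⟩)
      have hnorm : ‖Ft t - Ft s‖ ≤ ∫ u in s..t, g u := by
        rw [hFsub]
        exact intervalIntegral.norm_integral_le_integral_norm hst
      have hgsInt : IntegrableOn g (Set.Ioc s t) volume := by
        refine (intervalIntegrable_iff_integrableOn_Ioc_of_le hst).1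
          (((hInt t ⟨ht.1, ht.2⟩).norm).mono_set ?_)
        rw [Set.uIcc_of_le hst, Set.uIcc_of_le ht.1]
        exact Set.Icc_subset_Icc hs.1.le le_rfl
      have hof : ENNReal.ofReal (∫ u in s..t, g u)
          = ∫⁻ u in Set.Ioc s t, ENNReal.ofReal (g u) := by
        rw [intervalIntegral.integral_of_le hst]
        exact ofReal_integral_eq_lintegral_ofReal hgsInt (Filter.Eventually.of_forall hg0)
      calc ENNReal.ofReal (‖Ft t - Ft s‖ * (t - s) ^ (-α - 1))
          = ENNReal.ofReal ‖Ft t - Ft s‖ * ENNReal.ofReal ((t - s) ^ (-α - 1)) :=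
            ENNReal.ofReal_mul (norm_nonneg _)
        _ ≤ ENNReal.ofReal (∫ u in s..t, g u) * ENNReal.ofReal ((t - s) ^ (-α - 1)) :=
            mul_le_mul_left (ENNReal.ofReal_le_ofReal hnorm) _
        _ = (∫⁻ u in Set.Ioc s t, ENNReal.ofReal (g u)) * ENNReal.ofReal ((t - s) ^ (-α - 1)) := by
            rw [hof]
        _ = ∫⁻ u in Set.Ioc s t, P s u := by
            rw [← lintegral_mul_const' _ _ ENNReal.ofReal_ne_top]
    have hstep4 : ∫⁻ u in Set.Ioc 0 t, ∫⁻ s in Set.Ioo 0 u, P s u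
        ≤ ∫⁻ u in Set.Ioc 0 t, ENNReal.ofReal α⁻¹ * ee α g t u := by
      have haemem : ∀ᵐ u ∂(volume.restrict (Set.Ioc 0 t)), u ∈ Set.Ioo 0 t := by
        have h1 : ∀ᵐ u ∂(volume.restrict (Set.Ioc 0 t)), u ≠ t := by
          rw [ae_iff, Measure.restrict_apply' measurableSet_Ioc]
          refine measure_mono_null (fun u hu => ?_) (measure_singleton t)
          simp only [Set.mem_inter_iff, Set.mem_setOf_eq, not_not] at hu
          exact hu.1
        filter_upwards [h1, ae_restrict_mem measurableSet_Ioc] with u h1 h2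
        exact ⟨h2.1, lt_of_le_of_ne h2.2 h1⟩
      refine lintegral_mono_ae ?_
      filter_upwards [haemem] with u hu
      have hu0 : (0:ℝ) < u := hu.1
      have hut : u < t := hu.2
      have hinner : ∫⁻ s in Set.Ioo 0 u, ENNReal.ofReal ((t - s) ^ (-α - 1))
          = ENNReal.ofReal (α⁻¹ * ((t - u) ^ (-α) - t ^ (-α))) := by
        rw [setLIntegral_congr Ioo_ae_eq_Ioc]
        rw [← ofReal_integral_eq_lintegral_ofReal (comp1int α t u hu0.le hut) ?_]
        · rw [← intervalIntegral.integral_of_le hu0.le, comp1 α t u hα hu0.le hut]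
        · refine (ae_restrict_iff' measurableSet_Ioc).2 (Filter.Eventually.of_forall ?_)
          intro s hs
          exact Real.rpow_nonneg (by linarith [hs.2]) _
      calc ∫⁻ s in Set.Ioo 0 u, P s u
          = ENNReal.ofReal (g u) * ∫⁻ s in Set.Ioo 0 u, ENNReal.ofReal ((t - s) ^ (-α - 1)) :=
            lintegral_const_mul' _ _ ENNReal.ofReal_ne_top
        _ = ENNReal.ofReal (g u) * ENNReal.ofReal (α⁻¹ * ((t - u) ^ (-α) - t ^ (-α))) := by
            rw [hinner]
        _ ≤ ENNReal.ofReal (g u) * ENNReal.ofReal (α⁻¹ * (t - u) ^ (-α)) := by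
            refine mul_le_mul_right (ENNReal.ofReal_le_ofReal ?_) _
            refine mul_le_mul_of_nonneg_left ?_ (inv_nonneg.2 hα.le)
            exact sub_le_self _ (Real.rpow_nonneg (by linarith) _)
        _ = ENNReal.ofReal α⁻¹ * ee α g t u := by
            rw [ee, ENNReal.ofReal_mul (hg0 u), ENNReal.ofReal_mul (inv_nonneg.2 hα.le)]
            ring
    calc ∫⁻ s in Set.Ioc 0 t, ENNReal.ofReal (‖Ft t - Ft s‖ * (t - s) ^ (-α - 1))
        = ∫⁻ s in Set.Ioo 0 t, ENNReal.ofReal (‖Ft t - Ft s‖ * (t - s) ^ (-α - 1)) :=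
          (setLIntegral_congr Ioo_ae_eq_Ioc).symm
      _ ≤ ∫⁻ s in Set.Ioo 0 t, ∫⁻ u in Set.Ioc s t, P s u := hstep2
      _ = ∫⁻ s in Set.Ioc 0 t, ∫⁻ u in Set.Ioc s t, P s u :=
          setLIntegral_congr Ioo_ae_eq_Ioc
      _ = ∫⁻ u in Set.Ioc 0 t, ∫⁻ s in Set.Ioo 0 u, P s u := swap_aux t P hPm
      _ ≤ ∫⁻ u in Set.Ioc 0 t, ENNReal.ofReal α⁻¹ * ee α g t u := hstep4
      _ = ENNReal.ofReal α⁻¹ * WW α g t := by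
          rw [WW, lintegral_const_mul' _ _ ENNReal.ofReal_ne_top]
  have hT2 : (∫ s in (0:ℝ)..t, ‖Ft t - Ft s‖ * (t - s) ^ (-α - 1))
      ≤ α⁻¹ * (WW α g t).toReal := by
    rw [hJ]
    have h := ENNReal.toReal_mono (ENNReal.mul_ne_top ENNReal.ofReal_ne_top hWfin) hkey
    rwa [ENNReal.toReal_mul, ENNReal.toReal_ofReal (inv_nonneg.2 hα.le)] at h
  rw [hI]
  calc ‖∫ s in (0:ℝ)..t, f s‖ +
        (∫ s in (0:ℝ)..t, ‖Ft t - Ft s‖ * (t - s) ^ (-α - 1))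
      ≤ T ^ α * (WW α g t).toReal + α⁻¹ * (WW α g t).toReal := add_le_add hT1 hT2
    _ = (T ^ α + α⁻¹) * (WW α g t).toReal := by ring
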